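/- Let p be prime, a an integer with 1 ≤ a < p, and define f_a(x) = c if c is the (unique) positive integer with 1/((c+1)x) ≤ ‖ax/p‖ < 1/(cx), and f_a(x) = 0 if ‖ax/p‖ ≥ 1/x. Then ∑_{x=1}^{p-1} f_a(x) ≥ (∑_{i=1}^{l(a)} b_i(a)) - 5·log p. -/

import Mathlib

open scoped Classical

/-- The list of partial quotients `[b₁, …, b_l]` of the continued fraction expansion
`a/p = [0; b₁, …, b_l]` (computed by the Euclidean algorithm). -/
def cfl : ℕ → ℕ → List ℕ
  | 0, _ => []
  | (a + 1), p => (p / (a + 1)) :: cfl (p % (a + 1)) (a + 1)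
termination_by a _ => a
decreasing_by exact Nat.mod_lt _ (Nat.succ_pos _)

/-- Distance from a real number to the nearest integer. -/
noncomputable def distNearestInt (z : ℝ) : ℝ := |z - round z|

/-- `f_a(x) = c` if `c` is the (unique) positive integer with
`1/((c+1)x) ≤ ‖ax/p‖ < 1/(cx)`, and `f_a(x) = 0` otherwise. -/
noncomputable def fA (p a x : ℕ) : ℕ :=
  if h : ∃ c : ℕ, 0 < c ∧ 1 / (((c : ℝ) + 1) * x) ≤ distNearestInt ((a : ℝ) * x / p) ∧
      distNearestInt ((a : ℝ) * x / p) < 1 / ((c : ℝ) * x) then h.choose else 0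

namespace CFP

/-- The sequence of remainders of the Euclidean algorithm: `rf a p 0 = p`, `rf a p 1 = a`,
`rf a p (n+2) = rf a p n % rf a p (n+1)`. -/
def rf : ℕ → ℕ → ℕ → ℕ
  | _, p, 0 => p
  | a, p, n+1 => rf (p % a) a n

/-- Denominators of the convergents (shifted): `qf a p (n+1)` is the denominator `q_n`. -/
def qf (a p : ℕ) : ℕ → ℕ
  | 0 => 0
  | 1 => 1
  | n+2 => (rf a p n / rf a p (n+1)) * qf a p (n+1) + qf a p n

lemma rf_shift (a p n : ℕ) : rf a p (n+1) = rf (p % a) a n := rfl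

lemma rf_two (a p n : ℕ) : rf a p (n+2) = rf a p n % rf a p (n+1) := by
  induction n generalizing a p with
  | zero => rfl
  | succ n ih => rw [rf_shift a p (n+2), ih, ← rf_shift, ← rf_shift]

lemma qf_two (a p n : ℕ) :
    qf a p (n+2) = (rf a p n / rf a p (n+1)) * qf a p (n+1) + qf a p n := rfl

lemma rq_identity (a p : ℕ) : ∀ n, rf a p n * qf a p (n+1) + rf a p (n+1) * qf a p n = p
  | 0 => by simp [rf, qf]
  | n+1 => by
    have h := rq_identity a p n
    have h2 : rf a p (n+1) * (rf a p n / rf a p (n+1)) + rf a p n % rf a p (n+1) = rf a p n :=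
      Nat.div_add_mod _ _
    rw [rf_two, qf_two]
    nlinarith [h, h2]

lemma aq_identity (a p : ℕ) :
    ∀ n, ∃ k : ℤ, (a:ℤ) * qf a p n = p * k - (-1)^n * rf a p n
  | 0 => ⟨1, by simp [rf, qf]⟩
  | 1 => ⟨0, by simp [rf, qf]⟩
  | n+2 => by
    obtain ⟨k1, h1⟩ := aq_identity a p (n+1)
    obtain ⟨k0, h0⟩ := aq_identity a p n
    set B := rf a p n / rf a p (n+1) with hB
    set M := rf a p n % rf a p (n+1) with hM
    refine ⟨(B : ℤ) * k1 + k0, ?_⟩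
    have hdm : ((rf a p (n+1) : ℤ) * B + M) = rf a p n := by
      exact_mod_cast congrArg (Nat.cast : ℕ → ℤ) (Nat.div_add_mod (rf a p n) (rf a p (n+1)))
    rw [rf_two, qf_two, ← hB, ← hM]
    push_cast [Nat.cast_add, Nat.cast_mul]
    linear_combination (B : ℤ) * h1 + h0 + (-1:ℤ)^n * hdm

lemma rf_pos (a p : ℕ) : ∀ n < (cfl a p).length, 0 < rf a p (n+1) := by
  induction a, p using cfl.induct with
  | case1 p => simp [cfl]
  | case2 a p ih =>
    intro n hn
    cases n with
    | zero => exact Nat.succ_pos a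
    | succ m =>
      rw [show rf (a+1) p (m+2) = rf (p % (a+1)) (a+1) (m+1) from rfl]
      apply ih
      simp [cfl] at hn
      omega

lemma cfl_sum (a p : ℕ) :
    (cfl a p).sum = ∑ n ∈ Finset.range (cfl a p).length, rf a p n / rf a p (n+1) := by
  induction a, p using cfl.induct with
  | case1 p => simp [cfl]
  | case2 a p ih =>
    rw [cfl]
    simp only [List.sum_cons, List.length_cons, ih, Finset.sum_range_succ']
    rw [add_comm]
    rfl

lemma cfl_length_pos (a p : ℕ) (ha : 0 < a) : 0 < (cfl a p).length := by
  cases a with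
  | zero => omega
  | succ b => rw [cfl]; simp

lemma dist_eq_of (k : ℤ) (e : ℝ) (he : |e| ≤ 1/2) :
    distNearestInt ((k : ℝ) + e) = |e| := by
  have hub : distNearestInt ((k:ℝ) + e) ≤ |e| := by
    have := round_le ((k:ℝ) + e) k
    rw [add_sub_cancel_left] at this
    exact this
  refine le_antisymm hub ?_
  rw [distNearestInt, round_intCast_add]
  have heq : (k:ℝ) + e - ((k + round e : ℤ) : ℝ) = e - (round e : ℤ) := by push_cast; ring
  rw [heq]
  rcases eq_or_ne (round e) 0 with h | h
  · simp [h]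
  · have h1 : (1:ℝ) ≤ |((round e : ℤ) : ℝ)| := by
      rw [← Int.cast_abs]
      exact_mod_cast Int.one_le_abs h
    have h2 := abs_sub_abs_le_abs_sub ((round e : ℤ) : ℝ) e
    rw [abs_sub_comm] at h2
    linarith

lemma fA_eq (p a x c : ℕ) (hc : 0 < c)
    (h1 : 1 / (((c:ℝ)+1) * x) ≤ distNearestInt ((a:ℝ)*x/p))
    (h2 : distNearestInt ((a:ℝ)*x/p) < 1 / ((c:ℝ)*x)) : fA p a x = c := by
  have hx : 0 < (x:ℝ) := by
    rcases Nat.eq_zero_or_pos x with rfl | hx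
    · exfalso
      simp only [Nat.cast_zero, mul_zero, div_zero, one_div, inv_zero] at h2
      exact absurd h2 (not_lt.mpr (abs_nonneg _))
    · exact_mod_cast hx
  have hex : ∃ c : ℕ, 0 < c ∧ 1 / (((c : ℝ) + 1) * x) ≤ distNearestInt ((a : ℝ) * x / p) ∧
      distNearestInt ((a : ℝ) * x / p) < 1 / ((c : ℝ) * x) := ⟨c, hc, h1, h2⟩
  rw [fA, dif_pos hex]
  obtain ⟨hc', h1', h2'⟩ := hex.choose_spec
  set c' := hex.choose with hc'def
  have hcc : ∀ (u v : ℕ), 0 < v → 1 / (((u:ℝ)+1) * x) ≤ distNearestInt ((a:ℝ)*x/p) →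
      distNearestInt ((a:ℝ)*x/p) < 1 / ((v:ℝ)*x) → v ≤ u := by
    intro u v hv hu2 hv2
    have hvx : 0 < (v:ℝ) * x := by
      have : (0:ℝ) < v := by exact_mod_cast hv
      positivity
    have hux : 0 < ((u:ℝ)+1) * x := by positivity
    have hlt := lt_of_le_of_lt hu2 hv2
    rw [one_div_lt_one_div hux hvx] at hlt
    have : (v:ℝ) < (u:ℝ) + 1 := lt_of_mul_lt_mul_right hlt (le_of_lt hx)
    exact_mod_cast Nat.lt_succ_iff.mp (by exact_mod_cast this)
  exact le_antisymm (hcc c c' hc' h1 h2') (hcc c' c hc h1' h2)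

/-- Value of `fA` at a convergent denominator. -/
lemma fA_val (p a : ℕ) (hp : 0 < p) (n : ℕ)
    (h2r : 2 * rf a p (n+1) ≤ p) (hrpos : 0 < rf a p (n+1))
    (hqpos : 0 < qf a p (n+1))
    (hlt : qf a p (n+1) * rf a p (n+1) < p) :
    fA p a (qf a p (n+1)) = (p - 1) / (qf a p (n+1) * rf a p (n+1)) := by
  set x := qf a p (n+1) with hxdef
  set r' := rf a p (n+1) with hrdef
  set c := (p - 1) / (x * r') with hcdef
  -- distNearestInt (a x / p) = r' / p
  obtain ⟨k, hk⟩ := aq_identity a p (n+1)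
  have hpR : (0:ℝ) < p := by exact_mod_cast hp
  have hxR : (0:ℝ) < x := by exact_mod_cast hqpos
  have hrR : (0:ℝ) < r' := by exact_mod_cast hrpos
  have hz : (a:ℝ) * x / p = (k:ℝ) + ((-1:ℝ))^n * r' / p := by
    have hkR : (a:ℝ) * x = p * k - (-1:ℝ)^(n+1) * r' := by exact_mod_cast hk
    field_simp
    rw [hkR]
    ring
  have habs : |((-1:ℝ))^n * r' / p| = (r':ℝ)/p := by
    rw [abs_div, abs_mul, abs_pow, abs_neg, abs_one, one_pow, one_mul,
      abs_of_pos hrR, abs_of_pos hpR]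
  have hdist : distNearestInt ((a:ℝ) * x / p) = (r':ℝ)/p := by
    have h2rR : 2*(r':ℝ) ≤ p := by exact_mod_cast h2r
    rw [hz, dist_eq_of k _ (by
      rw [habs, div_le_div_iff₀ hpR (by norm_num : (0:ℝ) < 2)]
      linarith), habs]
  -- the sandwich for c
  have hxr : 0 < x * r' := Nat.mul_pos hqpos hrpos
  have hc1 : 1 ≤ c := by
    rw [hcdef]
    rw [Nat.one_le_div_iff hxr]
    omega
  have hupper : c * (x * r') ≤ p - 1 := Nat.div_mul_le_self _ _
  have hlower : p ≤ (c + 1) * (x * r') := by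
    have hdm := Nat.div_add_mod (p-1) (x*r')
    have hml := Nat.mod_lt (p-1) hxr
    have h4 : p - 1 < (x * r') * ((p-1)/(x*r')) + (x*r') := by omega
    have h5 : (c + 1) * (x * r') = (x * r') * ((p-1)/(x*r')) + (x*r') := by
      rw [hcdef]; ring
    omega
  apply fA_eq p a x c hc1
  · rw [hdist, div_le_div_iff₀ (by positivity) hpR]
    have : (p:ℝ) ≤ ((c+1) * (x * r') : ℕ) := by exact_mod_cast Nat.cast_le.mpr hlower
    push_cast at this ⊢
    nlinarith
  · rw [hdist, div_lt_div_iff₀ hpR (by positivity)]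
    have : ((c * (x * r') : ℕ) : ℝ) < p := by
      exact_mod_cast Nat.cast_lt.mpr (by omega : c * (x * r') < p)
    push_cast at this ⊢
    nlinarith

end CFP

open CFP

/-- `∑_{x=1}^{p-1} f_a(x) ≥ (∑_{i=1}^{l(a)} b_i(a)) - 5·log p`. -/
theorem sum_fA_ge (p : ℕ) (hp : p.Prime) (a : ℕ) (ha1 : 1 ≤ a) (hap : a < p) :
    ((cfl a p).sum : ℝ) - 5 * Real.log p ≤ ∑ x ∈ Finset.Icc 1 (p - 1), (fA p a x : ℝ) := by
  classical
  have hp2 : 2 ≤ p := hp.two_le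
  set l := (cfl a p).length with hl
  have H : ∀ n < l, 0 < rf a p (n+1) := rf_pos a p
  have hid : ∀ n, rf a p n * qf a p (n+1) + rf a p (n+1) * qf a p n = p := rq_identity a p
  have hl1 : 1 ≤ l := cfl_length_pos a p ha1
  have hr0 : rf a p 0 = p := rfl
  have hr1 : rf a p 1 = a := rfl
  have hq0 : qf a p 0 = 0 := rfl
  have hq1 : qf a p 1 = 1 := rfl
  have hdec : ∀ n, n+1 < l → rf a p (n+2) < rf a p (n+1) := by
    intro n hn
    rw [rf_two]
    exact Nat.mod_lt _ (H n (by omega))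
  have hrle : ∀ n < l, rf a p (n+1) ≤ rf a p n := by
    intro n hn
    cases n with
    | zero => rw [hr0, hr1]; omega
    | succ m => exact le_of_lt (hdec m hn)
  have hB1 : ∀ n < l, 1 ≤ rf a p n / rf a p (n+1) := by
    intro n hn
    rw [Nat.one_le_div_iff (H n hn)]
    exact hrle n hn
  have hqpos : ∀ n < l, 1 ≤ qf a p (n+1) := by
    intro n
    induction n with
    | zero => intro _; rw [hq1]
    | succ m ih =>
      intro hn
      have h1 := hB1 m (by omega)
      have h2 := ih (by omega)
      rw [qf_two]
      have := Nat.mul_le_mul h1 h2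
      omega
  have hqlt : ∀ n < l, qf a p (n+1) ≤ p - 1 := by
    intro n hn
    cases n with
    | zero => rw [hq1]; omega
    | succ m =>
      simp only [show m+1+1 = m+2 from rfl]
      have e := hid (m+1)
      simp only [show m+1+1 = m+2 from rfl] at e
      have h1 : 1 ≤ rf a p (m+1) := H m (by omega)
      have h2 : 1 ≤ rf a p (m+2) := H (m+1) hn
      have h3 : 1 ≤ qf a p (m+1) := hqpos m (by omega)
      have h4 : qf a p (m+2) ≤ rf a p (m+1) * qf a p (m+2) := Nat.le_mul_of_pos_left _ h1
      have h5 : 1 ≤ rf a p (m+2) * qf a p (m+1) := by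
        calc 1 = 1 * 1 := rfl
        _ ≤ rf a p (m+2) * qf a p (m+1) := Nat.mul_le_mul h2 h3
      omega
  have hstep : ∀ n, 1 ≤ n → n < l → qf a p (n+1) < qf a p (n+2) := by
    intro n h1 hn
    obtain ⟨m, rfl⟩ : ∃ m, n = m + 1 := ⟨n-1, by omega⟩
    show qf a p (m+2) < (rf a p (m+1) / rf a p (m+2)) * qf a p (m+2) + qf a p (m+1)
    have hb : 1 ≤ rf a p (m+1) / rf a p (m+2) := hB1 (m+1) hn
    have hqn := hqpos m (by omega)
    have h2 : qf a p (m+2) ≤ (rf a p (m+1) / rf a p (m+2)) * qf a p (m+2) :=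
      Nat.le_mul_of_pos_left _ hb
    omega
  -- Fibonacci growth and the length bound
  have hfib : ∀ n ≤ l, Nat.fib n ≤ qf a p n := by
    intro n
    induction n using Nat.strong_induction_on with
    | _ n ih =>
      match n with
      | 0 => intro _; simp [hq0]
      | 1 => intro _; simp [hq1]
      | (m+2) =>
        intro hn
        have h1 := ih (m+1) (by omega) (by omega)
        have h0 := ih m (by omega) (by omega)
        have hb := hB1 m (by omega)
        have h2 : qf a p (m+1) ≤ (rf a p m / rf a p (m+1)) * qf a p (m+1) :=
          Nat.le_mul_of_pos_left _ hb
        rw [qf_two, Nat.fib_add_two]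
        omega
  have hpfib : Nat.fib (l+1) ≤ p := by
    obtain ⟨m, hm⟩ : ∃ m, l = m+1 := ⟨l-1, by omega⟩
    have e := hid m
    have hrm : 1 ≤ rf a p m := by
      cases m with
      | zero => rw [hr0]; omega
      | succ k => exact H k (by omega)
    have hrm1 : 1 ≤ rf a p (m+1) := H m (by omega)
    have f1 := hfib (m+1) (by omega)
    have f0 := hfib m (by omega)
    have h4 : qf a p (m+1) ≤ rf a p m * qf a p (m+1) := Nat.le_mul_of_pos_left _ hrm
    have h5 : qf a p m ≤ rf a p (m+1) * qf a p m := Nat.le_mul_of_pos_left _ hrm1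
    rw [hm, Nat.fib_add_two]
    omega
  have hfib2 : ∀ k:ℕ, 2^k ≤ Nat.fib (2*k+1) := by
    intro k; induction k with
    | zero => simp
    | succ k ih =>
      have h1 : Nat.fib (2*k+1) ≤ Nat.fib (2*k+2) := Nat.fib_mono (by omega)
      have h2 : Nat.fib (2*(k+1)+1) = Nat.fib (2*k+2) + Nat.fib (2*k+1) := by
        rw [show 2*(k+1)+1 = (2*k+1)+2 from by ring, Nat.fib_add_two,
          show 2*k+1+1 = 2*k+2 from rfl]
        exact Nat.add_comm _ _
      rw [pow_succ]
      omega
  have hp2l : 2^(l/2) ≤ p := by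
    have harg : 2*(l/2)+1 ≤ l+1 := by omega
    exact le_trans (le_trans (hfib2 (l/2)) (Nat.fib_mono harg)) hpfib
  have hlog : (l : ℝ) ≤ 5 * Real.log p := by
    have h1 : ((l/2 : ℕ) : ℝ) * Real.log 2 ≤ Real.log p := by
      rw [← Real.log_pow]
      apply Real.log_le_log (by positivity)
      exact_mod_cast hp2l
    have h2 : Real.log 2 ≤ Real.log p := by
      apply Real.log_le_log (by norm_num)
      exact_mod_cast hp2
    have h3 : (0.6931471803 : ℝ) < Real.log 2 := Real.log_two_gt_d9
    have h4 : (l:ℝ) ≤ 2 * ((l/2 : ℕ):ℝ) + 1 := by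
      have hn : l ≤ 2*(l/2)+1 := by omega
      have : (l:ℝ) ≤ ((2*(l/2)+1 : ℕ):ℝ) := Nat.cast_le.mpr hn
      push_cast at this
      linarith
    have h5 : (0:ℝ) ≤ ((l/2:ℕ):ℝ) := Nat.cast_nonneg _
    have h6 : 0 ≤ ((l/2:ℕ):ℝ) * (3*Real.log 2 - 2) := mul_nonneg h5 (by linarith)
    nlinarith
  -- the per-convergent lower bound on fA
  have hbound : ∀ n < l,
      ((rf a p n / rf a p (n+1) : ℕ) : ℝ) - 1 ≤ (fA p a (qf a p (n+1)) : ℝ) := by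
    intro n hn
    rcases le_or_gt (rf a p n / rf a p (n+1)) 1 with hb | hb
    · have hc1 : ((rf a p n / rf a p (n+1) : ℕ) : ℝ) ≤ 1 := by exact_mod_cast hb
      have hc2 : (0:ℝ) ≤ fA p a (qf a p (n+1)) := Nat.cast_nonneg _
      linarith
    · have h2r : 2 * rf a p (n+1) ≤ p := by
        cases n with
        | zero =>
          show 2 * rf a p 1 ≤ p
          have hb : 1 < rf a p 0 / rf a p 1 := hb
          rw [hr1]
          rw [hr0, hr1] at hb
          exact (Nat.le_div_iff_mul_le (by omega : 0 < a)).mp (by omega : 2 ≤ p / a)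
        | succ m =>
          simp only [show m+1+1 = m+2 from rfl] at *
          have e := hid (m+1)
          simp only [show m+1+1 = m+2 from rfl] at e
          have h1 := hdec m hn
          have h3 := hqpos m (by omega)
          have h4 := hqpos (m+1) hn
          simp only [show m+1+1 = m+2 from rfl] at h4
          have h5 : (rf a p (m+2) + 1) * 1 ≤ rf a p (m+1) * qf a p (m+2) :=
            Nat.mul_le_mul (by omega) h4
          have h6 : rf a p (m+2) * 1 ≤ rf a p (m+2) * qf a p (m+1) :=
            Nat.mul_le_mul_left _ h3
          omega
      have hlt : qf a p (n+1) * rf a p (n+1) < p := by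
        cases n with
        | zero =>
          show qf a p 1 * rf a p 1 < p
          rw [hq1, hr1]; omega
        | succ m =>
          simp only [show m+1+1 = m+2 from rfl] at *
          have e := hid (m+1)
          simp only [show m+1+1 = m+2 from rfl] at e
          have h1 := hdec m hn
          have h3 := hqpos m (by omega)
          have hq2pos : 0 < qf a p (m+2) := by
            have := hqpos (m+1) hn
            simpa [show m+1+1 = m+2 from rfl, Nat.one_le_iff_ne_zero, Nat.pos_iff_ne_zero] using this
          have h4 : qf a p (m+2) * rf a p (m+2) < qf a p (m+2) * rf a p (m+1) :=
            mul_lt_mul_of_pos_left h1 hq2pos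
          have h5 : 1 ≤ rf a p (m+2) * qf a p (m+1) := by
            calc 1 = 1 * 1 := rfl
            _ ≤ rf a p (m+2) * qf a p (m+1) := Nat.mul_le_mul (H (m+1) hn) h3
          have hcomm : qf a p (m+2) * rf a p (m+1) = rf a p (m+1) * qf a p (m+2) :=
            Nat.mul_comm _ _
          omega
      have hval := fA_val p a (by omega) n h2r (H n hn) (hqpos n hn) hlt
      rw [hval]
      have hnat : rf a p n / rf a p (n+1) - 1 ≤ (p-1) / (qf a p (n+1) * rf a p (n+1)) := by
        cases n with
        | zero =>
          show rf a p 0 / rf a p 1 - 1 ≤ (p-1) / (qf a p 1 * rf a p 1)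
          rw [hq1, hr0, hr1, one_mul]
          have h8 : p/a ≤ (p-1+a)/a := Nat.div_le_div_right (by omega)
          have h9 : (p-1+a)/a = (p-1)/a + 1 := Nat.add_div_right _ (by omega)
          have h10 : p/a ≤ (p-1)/a + 1 := by rw [← h9]; exact h8
          exact Nat.sub_le_iff_le_add.mpr h10
        | succ m =>
          simp only [show m+1+1 = m+2 from rfl] at *
          have e := hid (m+1)
          simp only [show m+1+1 = m+2 from rfl] at e
          have h3 := hqpos m (by omega)
          have h5 : 1 ≤ rf a p (m+2) * qf a p (m+1) := by
            calc 1 = 1 * 1 := rfl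
            _ ≤ rf a p (m+2) * qf a p (m+1) := Nat.mul_le_mul (H (m+1) hn) h3
          have h6 : rf a p (m+1) * qf a p (m+2) ≤ p - 1 := by omega
          have h7 : rf a p (m+1) / rf a p (m+2) ≤ (p-1) / (qf a p (m+2) * rf a p (m+2)) := by
            rw [Nat.le_div_iff_mul_le (Nat.mul_pos (hqpos (m+1) hn) (H (m+1) hn))]
            calc (rf a p (m+1) / rf a p (m+2)) * (qf a p (m+2) * rf a p (m+2))
                = ((rf a p (m+1) / rf a p (m+2)) * rf a p (m+2)) * qf a p (m+2) := by ring
              _ ≤ rf a p (m+1) * qf a p (m+2) :=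
                  Nat.mul_le_mul_right _ (Nat.div_mul_le_self _ _)
              _ ≤ p - 1 := h6
          omega
      have hge1 := hB1 n hn
      have hcast : ((rf a p n / rf a p (n+1) - 1 : ℕ) : ℝ) ≤
          (((p-1) / (qf a p (n+1) * rf a p (n+1)) : ℕ) : ℝ) := Nat.cast_le.mpr hnat
      rw [Nat.cast_sub hge1] at hcast
      simpa using hcast
  -- assembling the sum over the convergent denominators
  have key : ∀ t : ℕ, (∀ k, t ≤ k → k < l → qf a p (k+1) < qf a p (k+2)) →
      (∑ n ∈ Finset.Ico t l, (((rf a p n / rf a p (n+1) : ℕ):ℝ) - 1)) ≤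
        ∑ x ∈ Finset.Icc 1 (p-1), (fA p a x : ℝ) := by
    intro t hstep'
    have hchain : ∀ m n, t ≤ m → m < n → n < l → qf a p (m+1) < qf a p (n+1) := by
      intro m n hm hmn hn
      induction n with
      | zero => omega
      | succ k ih =>
        rcases eq_or_lt_of_le (by omega : m ≤ k) with h | h
        · subst h; exact hstep' m hm (by omega)
        · exact lt_trans (ih (by omega) (by omega)) (hstep' k (by omega) (by omega))
    have hinj : ∀ m ∈ Finset.Ico t l, ∀ n ∈ Finset.Ico t l,
        qf a p (m+1) = qf a p (n+1) → m = n := by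
      intro m hm n hn hmn
      simp only [Finset.mem_Ico] at hm hn
      rcases lt_trichotomy m n with h|h|h
      · exact absurd hmn (ne_of_lt (hchain m n hm.1 h hn.2))
      · exact h
      · exact absurd hmn.symm (ne_of_lt (hchain n m hn.1 h hm.2))
    have hsub : (Finset.Ico t l).image (fun n => qf a p (n+1)) ⊆ Finset.Icc 1 (p-1) := by
      intro x hx
      simp only [Finset.mem_image, Finset.mem_Ico] at hx
      obtain ⟨n, hn, rfl⟩ := hx
      exact Finset.mem_Icc.mpr ⟨hqpos n hn.2, hqlt n hn.2⟩
    calc ∑ n ∈ Finset.Ico t l, (((rf a p n / rf a p (n+1) : ℕ):ℝ) - 1)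
        ≤ ∑ n ∈ Finset.Ico t l, (fA p a (qf a p (n+1)) : ℝ) :=
          Finset.sum_le_sum (fun n hn => hbound n (Finset.mem_Ico.mp hn).2)
      _ = ∑ x ∈ (Finset.Ico t l).image (fun n => qf a p (n+1)), (fA p a x : ℝ) :=
          (Finset.sum_image (f := fun x => (fA p a x : ℝ)) hinj).symm
      _ ≤ ∑ x ∈ Finset.Icc 1 (p-1), (fA p a x : ℝ) :=
          Finset.sum_le_sum_of_subset_of_nonneg hsub (fun _ _ _ => Nat.cast_nonneg _)
  have hsum_cast : ((cfl a p).sum : ℝ) =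
      ∑ n ∈ Finset.range l, ((rf a p n / rf a p (n+1) : ℕ) : ℝ) := by
    rw [cfl_sum]
    push_cast
    rfl
  have hrange : ∑ n ∈ Finset.range l, (((rf a p n / rf a p (n+1) : ℕ):ℝ) - 1) =
      ((cfl a p).sum : ℝ) - l := by
    rw [Finset.sum_sub_distrib, Finset.sum_const, Finset.card_range, hsum_cast]
    simp
  rcases le_or_gt 2 (rf a p 0 / rf a p 1) with hcase | hcase
  · -- b₁ ≥ 2 : all convergent denominators are distinct
    have hq2 : qf a p 2 = rf a p 0 / rf a p 1 := by
      rw [qf_two, hq1, hq0]; ring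
    have hstep' : ∀ k, 0 ≤ k → k < l → qf a p (k+1) < qf a p (k+2) := by
      intro k _ hk
      cases k with
      | zero =>
        show qf a p 1 < qf a p 2
        rw [hq1, hq2]
        exact lt_of_lt_of_le one_lt_two hcase
      | succ m => exact hstep (m+1) (by omega) hk
    have hkey := key 0 hstep'
    rw [show Finset.Ico 0 l = Finset.range l from by rw [Finset.range_eq_Ico]] at hkey
    rw [hrange] at hkey
    linarith
  · -- b₁ = 1 : drop the first term, which contributes 0
    have hb0 : rf a p 0 / rf a p 1 = 1 := by
      have h1 : 1 ≤ rf a p 0 / rf a p 1 := hB1 0 (by omega)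
      omega
    have hkey := key 1 (fun k hk => hstep k hk)
    have hsplit : ∑ n ∈ Finset.range l, (((rf a p n / rf a p (n+1) : ℕ):ℝ) - 1) =
        (((rf a p 0 / rf a p 1 : ℕ):ℝ) - 1) +
        ∑ n ∈ Finset.Ico 1 l, (((rf a p n / rf a p (n+1) : ℕ):ℝ) - 1) := by
      rw [Finset.range_eq_Ico]
      exact Finset.sum_eq_sum_Ico_succ_bot (by omega) _
    rw [hb0] at hsplit
    simp only [Nat.cast_one, sub_self, zero_add] at hsplit
    rw [← hsplit, hrange] at hkey
    linarith
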